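/- arXiv:1006.3337 — 2 statements merged into one kernel-verified Lean document; each statement's English description precedes it below -/
import Mathlib

section
/- Let u(t) = √(ȳ/V₀)·sinh(t/2)/sinh(T/2) − e^{−T/2}·sinh(t/2)/sinh(T/2) + e^{−t/2} on [0,T] with ȳ > V₀ > 0. If ȳ/V₀ > (1 + 2 sinh(T/2))², then u'(t) ≥ u'(0) ≥ 1/4 for all t ∈ [0,T]. -/
lemma stmt7_deriv (A E s : ℝ) (t : ℝ) :
    HasDerivAt (fun t => A * (Real.sinh (t / 2) / s) - E * (Real.sinh (t / 2) / s)
      + Real.exp (-t / 2))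
    ((A - E) * (Real.cosh (t / 2) / (2 * s)) - Real.exp (-t / 2) / 2) t := by
  have h1 : HasDerivAt (fun t : ℝ => t / 2) (1 / 2) t := (hasDerivAt_id t).div_const 2
  have hs : HasDerivAt (fun t : ℝ => Real.sinh (t / 2)) (Real.cosh (t / 2) * (1 / 2)) t :=
    h1.sinh
  have h2 : HasDerivAt (fun t : ℝ => -t / 2) (-1 / 2) t := ((hasDerivAt_id t).neg).div_const 2
  have he : HasDerivAt (fun t : ℝ => Real.exp (-t / 2)) (Real.exp (-t / 2) * (-1 / 2)) t :=
    h2.exp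
  have := (((hs.div_const s).const_mul A).sub ((hs.div_const s).const_mul E)).add he
  refine this.congr_deriv ?_
  ring

theorem stmt7 (T V₀ ybar : ℝ) (hT : 0 < T) (hV : 0 < V₀) (hy : V₀ < ybar)
    (hcond : (1 + 2 * Real.sinh (T / 2)) ^ 2 < ybar / V₀)
    (u : ℝ → ℝ)
    (hu : u = fun t => Real.sqrt (ybar / V₀) * (Real.sinh (t / 2) / Real.sinh (T / 2))
      - Real.exp (-T / 2) * (Real.sinh (t / 2) / Real.sinh (T / 2))
      + Real.exp (-t / 2)) :
    ∀ t ∈ Set.Icc (0:ℝ) T, 1 / 4 ≤ deriv u 0 ∧ deriv u 0 ≤ deriv u t := by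
  set A := Real.sqrt (ybar / V₀) with hA
  set E := Real.exp (-T / 2) with hE
  set s := Real.sinh (T / 2) with hs
  have hspos : 0 < s := Real.sinh_pos_iff.mpr (by linarith)
  have hE1 : E < 1 := Real.exp_lt_one_iff.mpr (by linarith)
  have hA1 : 1 + 2 * s < A := by
    have h0 : (0:ℝ) ≤ 1 + 2 * s := by linarith
    calc 1 + 2 * s = Real.sqrt ((1 + 2 * s) ^ 2) := by
          rw [Real.sqrt_sq h0]
      _ < A := Real.sqrt_lt_sqrt (by positivity) hcond
  have hAE : 0 < A - E := by linarith
  have hd : ∀ t : ℝ, deriv u t = (A - E) * (Real.cosh (t / 2) / (2 * s)) - Real.exp (-t / 2) / 2 := by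
    intro t
    rw [hu]
    exact (stmt7_deriv A E s t).deriv
  intro t ht
  obtain ⟨ht0, htT⟩ := ht
  have h0 : deriv u 0 = (A - E) / (2 * s) - 1 / 2 := by
    rw [hd 0]
    norm_num
    ring
  constructor
  · rw [h0]
    rw [le_sub_iff_add_le, le_div_iff₀ (by linarith : (0:ℝ) < 2 * s)]
    linarith
  · rw [h0, hd t]
    have hc : 1 ≤ Real.cosh (t / 2) := Real.one_le_cosh _
    have hex : Real.exp (-t / 2) ≤ 1 := Real.exp_le_one_iff.mpr (by linarith)
    have key : (A - E) / (2 * s) ≤ (A - E) * (Real.cosh (t / 2) / (2 * s)) := by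
      rw [mul_div_assoc', div_le_div_iff_of_pos_right (by linarith : (0:ℝ) < 2 * s)]
      nlinarith
    linarith
end

section
/- Let u(t) = √(ȳ/V₀)·sinh(t/2)/sinh(T/2) − e^{−T/2}·sinh(t/2)/sinh(T/2) + e^{−t/2} with ȳ > V₀ > 0 and ȳ/V₀ > (1+2sinh(T/2))². Then u and u' are increasing on [0,T], sup u = u(T) = √(ȳ/V₀), and sup u' = u'(T) ≤ √(ȳ/V₀)/(2 tanh(T/2)). -/
theorem stmt8 (T V₀ ybar : ℝ) (hT : 0 < T) (hV : 0 < V₀) (hy : V₀ < ybar)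
    (hcond : (1 + 2 * Real.sinh (T / 2)) ^ 2 < ybar / V₀)
    (u : ℝ → ℝ)
    (hu : u = fun t => Real.sqrt (ybar / V₀) * (Real.sinh (t / 2) / Real.sinh (T / 2))
      - Real.exp (-T / 2) * (Real.sinh (t / 2) / Real.sinh (T / 2))
      + Real.exp (-t / 2)) :
    MonotoneOn u (Set.Icc 0 T) ∧ MonotoneOn (deriv u) (Set.Icc 0 T) ∧
    u T = Real.sqrt (ybar / V₀) ∧
    (∀ t ∈ Set.Icc (0:ℝ) T, u t ≤ u T) ∧
    (∀ t ∈ Set.Icc (0:ℝ) T, deriv u t ≤ deriv u T) ∧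
    deriv u T ≤ Real.sqrt (ybar / V₀) / (2 * Real.tanh (T / 2)) := by
  have hs2 : 0 < Real.sinh (T / 2) := Real.sinh_pos_iff.2 (by linarith)
  set s := Real.sqrt (ybar / V₀) with hsdef
  have hs_gt : 1 + 2 * Real.sinh (T / 2) < s := by
    rw [hsdef]
    exact (Real.lt_sqrt (by positivity)).2 hcond
  have heT : Real.exp (-T / 2) < 1 := Real.exp_lt_one_iff.2 (by linarith)
  have heTpos : 0 < Real.exp (-T / 2) := Real.exp_pos _
  set a := s - Real.exp (-T / 2) with hadef
  have ha : Real.sinh (T / 2) < a := by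
    simp only [hadef]; linarith
  have hapos : 0 < a := lt_trans hs2 ha
  -- derivative
  have hD : ∀ t : ℝ, HasDerivAt u
      (a * Real.cosh (t / 2) / (2 * Real.sinh (T / 2)) - Real.exp (-t / 2) / 2) t := by
    intro t
    rw [hu]
    have h1 : HasDerivAt (fun t : ℝ => t / 2) (1 / 2) t := (hasDerivAt_id t).div_const 2
    have hsinh : HasDerivAt (fun t : ℝ => Real.sinh (t / 2)) (Real.cosh (t / 2) * (1 / 2)) t :=
      by have := (Real.hasDerivAt_sinh (t / 2)).comp t h1; exact this
    have h2 : HasDerivAt (fun t : ℝ => -t / 2) (-(1 / 2)) t := by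
      simpa [neg_div] using h1.fun_neg
    have hexp : HasDerivAt (fun t : ℝ => Real.exp (-t / 2))
        (Real.exp (-t / 2) * (-(1 / 2))) t :=
      by have := (Real.hasDerivAt_exp (-t / 2)).comp t h2; exact this
    have := (((hsinh.div_const (Real.sinh (T / 2))).const_mul s).sub
      ((hsinh.div_const (Real.sinh (T / 2))).const_mul (Real.exp (-T / 2)))).add hexp
    refine this.congr_deriv ?_
    simp only [hadef]
    field_simp
    ring
  have hdu : deriv u = fun t =>
      a * Real.cosh (t / 2) / (2 * Real.sinh (T / 2)) - Real.exp (-t / 2) / 2 :=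
    funext fun t => (hD t).deriv
  have hdiff : Differentiable ℝ u := fun t => (hD t).differentiableAt
  -- nonneg derivative on [0, ∞)
  have hDnn : ∀ x : ℝ, 0 ≤ x → 0 ≤ deriv u x := by
    intro x hx
    rw [hdu]
    have hc1 : 1 ≤ Real.cosh (x / 2) := Real.one_le_cosh _
    have he1 : Real.exp (-x / 2) ≤ 1 := Real.exp_le_one_iff.2 (by linarith)
    have hk : (0 : ℝ) < 2 * Real.sinh (T / 2) := by linarith
    rw [sub_nonneg, div_le_div_iff₀ two_pos hk]
    nlinarith [Real.exp_pos (-x / 2)]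
  -- monotone deriv
  have hmonoD : MonotoneOn (deriv u) (Set.Icc 0 T) := by
    rw [hdu]
    intro x hx y hy hxy
    have hcosh : Real.cosh (x / 2) ≤ Real.cosh (y / 2) := by
      rw [Real.cosh_le_cosh, abs_of_nonneg (by linarith [hx.1]), abs_of_nonneg (by linarith [hy.1])]
      linarith
    have hexp : Real.exp (-y / 2) ≤ Real.exp (-x / 2) := Real.exp_le_exp.2 (by linarith)
    have h3 : a * Real.cosh (x / 2) / (2 * Real.sinh (T / 2)) ≤
        a * Real.cosh (y / 2) / (2 * Real.sinh (T / 2)) := by gcongr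
    dsimp only
    linarith
  have hmonoU : MonotoneOn u (Set.Icc 0 T) := by
    apply monotoneOn_of_deriv_nonneg (convex_Icc 0 T) hdiff.continuous.continuousOn
      (fun x _ => (hdiff x).differentiableWithinAt)
    intro x hx
    rw [interior_Icc] at hx
    exact hDnn x (le_of_lt hx.1)
  have huT : u T = s := by
    rw [hu]
    simp only
    rw [div_self hs2.ne']
    ring
  have hTmem : T ∈ Set.Icc (0 : ℝ) T := ⟨le_of_lt hT, le_refl T⟩
  refine ⟨hmonoU, hmonoD, huT, fun t ht => hmonoU ht hTmem ht.2,
    fun t ht => hmonoD ht hTmem ht.2, ?_⟩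
  rw [hdu, Real.tanh_eq_sinh_div_cosh]
  have hcpos : 0 < Real.cosh (T / 2) := Real.cosh_pos _
  have hrhs : s / (2 * (Real.sinh (T / 2) / Real.cosh (T / 2))) =
      s * Real.cosh (T / 2) / (2 * Real.sinh (T / 2)) := by
    field_simp
  rw [hrhs]
  have h1 : a * Real.cosh (T / 2) ≤ s * Real.cosh (T / 2) := by nlinarith
  have h2 : a * Real.cosh (T / 2) / (2 * Real.sinh (T / 2)) ≤
      s * Real.cosh (T / 2) / (2 * Real.sinh (T / 2)) := by gcongr
  have h3 : 0 < Real.exp (-T / 2) / 2 := by positivity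
  dsimp only
  linarith
end
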